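/- Symmetry relations for the time-reversal-symmetric cycle (V = U†): let U be a 2×2 unitary matrix, (e₊, e₋) and (f₊, f₋) orthonormal bases of ℂ², and Φ(X) = π₁Xπ₁ + π₂Xπ₂ a rank-one projective measurement channel. Then (i) ζ_c := e₋† U† Φ(f₊f₊†) U e₋ equals θ_c := f₋† Φ(U e₊e₊† U†) f₋, and (ii) ζ := |e₊† U† f₋|² equals δ′ := |f₊† U e₋|². -/

import Mathlib

open Matrix

private lemma vmv_mulVec (a b x : Fin 2 → ℂ) : vecMulVec a b *ᵥ x = (b ⬝ᵥ x) • a := by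
  ext i
  simp [vecMulVec_apply, mulVec, dotProduct, Finset.sum_mul]
  ring

private lemma complete2 (a b : Fin 2 → ℂ) (ha : star a ⬝ᵥ a = 1) (hb : star b ⬝ᵥ b = 1)
    (hab : star a ⬝ᵥ b = 0) :
    vecMulVec a (star a) + vecMulVec b (star b) = 1 := by
  simp only [dotProduct, Fin.sum_univ_two, Pi.star_apply, Complex.star_def] at ha hb hab
  have hba : (starRingEnd ℂ) (b 0) * a 0 + (starRingEnd ℂ) (b 1) * a 1 = 0 := by
    have := congrArg (starRingEnd ℂ) hab
    simp only [map_add, _root_.map_mul, Complex.conj_conj, map_zero] at this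
    linear_combination this
  set A : Matrix (Fin 2) (Fin 2) ℂ := Matrix.of fun i j => if j = 0 then a i else b i with hA
  have h1 : Aᴴ * A = 1 := by
    ext i j
    fin_cases i <;> fin_cases j <;>
      · simp [hA, mul_apply, conjTranspose_apply, Fin.sum_univ_two, Complex.star_def]
        first
        | linear_combination ha
        | linear_combination hb
        | linear_combination hab
        | linear_combination hba
  have h2 : A * Aᴴ = 1 := mul_eq_one_comm.mp h1
  rw [← h2]
  ext i j
  simp [hA, mul_apply, conjTranspose_apply, Fin.sum_univ_two, vecMulVec_apply, Complex.star_def]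

private lemma conj_vmv (M : Matrix (Fin 2) (Fin 2) ℂ) (a : Fin 2 → ℂ) :
    M * vecMulVec a (star a) * Mᴴ = vecMulVec (M *ᵥ a) (star (M *ᵥ a)) := by
  ext i j
  simp [mul_apply, vecMulVec_apply, mulVec, dotProduct, conjTranspose_apply,
    Fin.sum_univ_two, Pi.star_apply, Complex.star_def, map_add, _root_.map_mul]
  fin_cases i <;> fin_cases j <;> simp <;> ring

private lemma pair (x y : Fin 2 → ℂ) :
    star x ⬝ᵥ (vecMulVec y (star y) *ᵥ x) = (star y ⬝ᵥ x) * (star x ⬝ᵥ y) := by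
  rw [vmv_mulVec, dotProduct_smul, smul_eq_mul]

private lemma quad (x y j : Fin 2 → ℂ) :
    star x ⬝ᵥ ((vecMulVec j (star j) * vecMulVec y (star y) * vecMulVec j (star j)) *ᵥ x) =
      (star j ⬝ᵥ y) * (star y ⬝ᵥ j) * ((star j ⬝ᵥ x) * (star x ⬝ᵥ j)) := by
  simp only [← mulVec_mulVec, vmv_mulVec, mulVec_smul, dotProduct_smul, smul_smul, smul_eq_mul]
  ring

private lemma pairsum (A B : Matrix (Fin 2) (Fin 2) ℂ) (h : A + B = 1) (x : Fin 2 → ℂ) :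
    star x ⬝ᵥ (A *ᵥ x) + star x ⬝ᵥ (B *ᵥ x) = star x ⬝ᵥ x := by
  rw [← dotProduct_add, ← add_mulVec, h, one_mulVec]

theorem time_reversal_symmetry_relations
    (ep em fp fm v w : Fin 2 → ℂ)
    (hep : star ep ⬝ᵥ ep = 1) (hem : star em ⬝ᵥ em = 1) (hepm : star ep ⬝ᵥ em = 0)
    (hfp : star fp ⬝ᵥ fp = 1) (hfm : star fm ⬝ᵥ fm = 1) (hfpm : star fp ⬝ᵥ fm = 0)
    (hv : star v ⬝ᵥ v = 1) (hw : star w ⬝ᵥ w = 1) (hvw : star v ⬝ᵥ w = 0)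
    (U : Matrix (Fin 2) (Fin 2) ℂ)
    (hU : Uᴴ * U = 1) (hU' : U * Uᴴ = 1)
    (Φ : Matrix (Fin 2) (Fin 2) ℂ → Matrix (Fin 2) (Fin 2) ℂ)
    (hΦ : ∀ X, Φ X = vecMulVec v (star v) * X * vecMulVec v (star v) +
        vecMulVec w (star w) * X * vecMulVec w (star w)) :
    star em ⬝ᵥ ((Uᴴ * Φ (vecMulVec fp (star fp)) * U) *ᵥ em) =
        star fm ⬝ᵥ (Φ (U * vecMulVec ep (star ep) * Uᴴ) *ᵥ fm) ∧
      ‖star ep ⬝ᵥ (Uᴴ *ᵥ fm)‖ ^ 2 = ‖star fp ⬝ᵥ (U *ᵥ em)‖ ^ 2 := by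
  set u : Fin 2 → ℂ := U *ᵥ em with hu
  set s : Fin 2 → ℂ := U *ᵥ ep with hs
  -- norms of u and s
  have hnu : star u ⬝ᵥ u = 1 := by
    rw [hu, star_mulVec, ← dotProduct_mulVec, mulVec_mulVec, hU, one_mulVec, hem]
  have hns : star s ⬝ᵥ s = 1 := by
    rw [hs, star_mulVec, ← dotProduct_mulVec, mulVec_mulVec, hU, one_mulVec, hep]
  -- completeness relations
  have hF : vecMulVec fp (star fp) + vecMulVec fm (star fm) = 1 := complete2 fp fm hfp hfm hfpm
  have hP : vecMulVec v (star v) + vecMulVec w (star w) = 1 := complete2 v w hv hw hvw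
  have hSU : vecMulVec s (star s) + vecMulVec u (star u) = 1 := by
    rw [hs, hu, ← conj_vmv, ← conj_vmv, ← add_mul, ← mul_add,
      complete2 ep em hep hem hepm, mul_one, hU']
  constructor
  · -- part (i)
    have hLHS : star em ⬝ᵥ ((Uᴴ * Φ (vecMulVec fp (star fp)) * U) *ᵥ em) =
        star u ⬝ᵥ (Φ (vecMulVec fp (star fp)) *ᵥ u) := by
      rw [← mulVec_mulVec, ← mulVec_mulVec, dotProduct_mulVec, ← star_mulVec, ← hu]
    rw [hLHS, conj_vmv, ← hs, hΦ, hΦ, add_mulVec, add_mulVec, dotProduct_add, dotProduct_add,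
      quad, quad, quad, quad]
    -- scalar relations
    have R1v := pairsum _ _ hF v; rw [pair, pair, hv] at R1v
    have R1w := pairsum _ _ hF w; rw [pair, pair, hw] at R1w
    have R2v := pairsum _ _ hSU v; rw [pair, pair, hv] at R2v
    have R2w := pairsum _ _ hSU w; rw [pair, pair, hw] at R2w
    have R3 := pairsum _ _ hP fp; rw [pair, pair, hfp] at R3
    have R4 := pairsum _ _ hP u; rw [pair, pair, hnu] at R4
    linear_combination R3 + R4 -
      (star fm ⬝ᵥ v * (star v ⬝ᵥ fm)) * R2v - (star fm ⬝ᵥ w * (star w ⬝ᵥ fm)) * R2w -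
      (1 - star u ⬝ᵥ v * (star v ⬝ᵥ u)) * R1v - (1 - star u ⬝ᵥ w * (star w ⬝ᵥ u)) * R1w
  · -- part (ii)
    have hz1 : star ep ⬝ᵥ (Uᴴ *ᵥ fm) = star s ⬝ᵥ fm := by
      rw [dotProduct_mulVec, ← star_mulVec, ← hs]
    have key : (star s ⬝ᵥ fm) * (star fm ⬝ᵥ s) = (star fp ⬝ᵥ u) * (star u ⬝ᵥ fp) := by
      have A1 := pairsum _ _ hF s; rw [pair, pair, hns] at A1
      have A2 := pairsum _ _ hSU fp; rw [pair, pair, hfp] at A2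
      linear_combination A1 - A2
    have c1 : (starRingEnd ℂ) (star s ⬝ᵥ fm) = star fm ⬝ᵥ s := by
      rw [← Complex.star_def, ← star_dotProduct]
    have c2 : (starRingEnd ℂ) (star fp ⬝ᵥ u) = star u ⬝ᵥ fp := by
      rw [← Complex.star_def, ← star_dotProduct]
    have hn : Complex.normSq (star s ⬝ᵥ fm) = Complex.normSq (star fp ⬝ᵥ u) := by
      have : ((Complex.normSq (star s ⬝ᵥ fm) : ℂ)) = (Complex.normSq (star fp ⬝ᵥ u) : ℂ) := by
        rw [← Complex.mul_conj, ← Complex.mul_conj, c1, c2]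
        exact key
      exact_mod_cast this
    rw [hz1, Complex.sq_norm, Complex.sq_norm, hn]
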